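/- Let y : [0,∞) → ℝⁿ be absolutely continuous with ⟨y'(t), y(t)⟩ ≤ -a‖y(t)‖² + b‖y(t)‖ for almost every t ≥ 0, where a > 0 and b ≥ 0. If ‖y(T)‖ ≤ b/a for some T ≥ 0, then ‖y(t)‖ ≤ b/a for all t ≥ T. -/

import Mathlib

open MeasureTheory

set_option maxHeartbeats 2000000

/-- If `y : [0,∞) → ℝⁿ` is absolutely continuous with
`⟨y'(t), y(t)⟩ ≤ -a‖y(t)‖² + b‖y(t)‖` for a.e. `t ≥ 0` (`a > 0`, `b ≥ 0`), and
`‖y(T)‖ ≤ b/a` for some `T ≥ 0`, then `‖y(t)‖ ≤ b/a` for all `t ≥ T`. -/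
theorem norm_le_invariance_of_ae_inner_deriv_bound
    {n : ℕ} (y y' : ℝ → EuclideanSpace ℝ (Fin n)) (a b T : ℝ)
    (ha : 0 < a) (hb : 0 ≤ b) (hT : 0 ≤ T)
    (hcont : ContinuousOn y (Set.Ici 0))
    (hint : ∀ S : ℝ, IntegrableOn y' (Set.Icc 0 S))
    (hftc : ∀ t ∈ Set.Ici (0:ℝ), y t = y 0 + ∫ τ in (0:ℝ)..t, y' τ)
    (hderiv : ∀ᵐ t ∂(volume.restrict (Set.Ici (0:ℝ))), HasDerivAt y (y' t) t)
    (hineq : ∀ᵐ t ∂(volume.restrict (Set.Ici (0:ℝ))),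
      inner ℝ (y' t) (y t) ≤ -a * ‖y t‖ ^ 2 + b * ‖y t‖)
    (hinit : ‖y T‖ ≤ b / a) :
    ∀ t, T ≤ t → ‖y t‖ ≤ b / a := by
  intro t₁ ht₁
  set c : ℝ := b / a with hc
  have hc0 : 0 ≤ c := div_nonneg hb ha.le
  have hac : a * c = b := by rw [hc]; field_simp
  have h0t₁ : (0:ℝ) ≤ t₁ := hT.trans ht₁
  -- interval integrability of y' and ‖y'‖ on nonnegative intervals
  have hi : ∀ u v : ℝ, 0 ≤ u → u ≤ v → IntervalIntegrable y' volume u v := by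
    intro u v hu huv
    rw [intervalIntegrable_iff_integrableOn_Ioc_of_le huv]
    exact (hint v).mono_set (Set.Ioc_subset_Icc_self.trans (Set.Icc_subset_Icc hu le_rfl))
  have hin : ∀ u v : ℝ, 0 ≤ u → u ≤ v → IntervalIntegrable (fun τ => ‖y' τ‖) volume u v :=
    fun u v hu huv => (hi u v hu huv).norm
  -- difference formula from the FTC hypothesis
  have hsub : ∀ u v : ℝ, 0 ≤ u → u ≤ v → y v - y u = ∫ τ in u..v, y' τ := by
    intro u v hu huv
    rw [hftc u hu, hftc v (hu.trans huv),
      ← intervalIntegral.integral_interval_sub_left (hi 0 v le_rfl (hu.trans huv))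
        (hi 0 u le_rfl hu)]
    abel
  -- the a.e. inequality in pointwise-implication form
  have hineq' : ∀ᵐ τ ∂(volume : Measure ℝ), τ ∈ Set.Ici (0:ℝ) →
      (inner ℝ (y' τ) (y τ) : ℝ) ≤ -a * ‖y τ‖ ^ 2 + b * ‖y τ‖ :=
    (ae_restrict_iff' measurableSet_Ici).mp hineq
  -- main estimate for each ε > 0
  have key : ∀ ε : ℝ, 0 < ε →
      ‖y t₁‖ ^ 2 ≤ c ^ 2 + ε * ((∫ τ in T..t₁, ‖y' τ‖) + (t₁ - T)) := by
    intro ε hε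
    set Φ : ℝ → ℝ := fun t => ∫ τ in T..t, ‖y' τ‖ with hΦ
    set Ψ : ℝ → ℝ := fun t => Φ t + (t - T) with hΨ
    set s : Set ℝ := {t | ‖y t‖ ^ 2 ≤ c ^ 2 + ε * Ψ t} with hs
    set η : ℝ := ε / (4 * b + 3) with hη
    have hη0 : 0 < η := div_pos hε (by linarith)
    have h4b : 4 * b * η ≤ ε := by
      rw [hη]; rw [div_eq_inv_mul]
      rw [← mul_assoc]
      have : (4 * b) * (4 * b + 3)⁻¹ ≤ 1 := by
        rw [mul_inv_le_iff₀ (by linarith)]; linarith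
      nlinarith [this]
    have h3η : 3 * η ≤ ε := by
      rw [hη, div_eq_inv_mul, ← mul_assoc]
      have : (3:ℝ) * (4 * b + 3)⁻¹ ≤ 1 := by
        rw [mul_inv_le_iff₀ (by linarith)]; linarith
      nlinarith [hε.le, this]
    have hIccIci : Set.Icc T t₁ ⊆ Set.Ici (0:ℝ) :=
      fun t ht => le_trans hT ht.1
    -- continuity of Ψ on [T, t₁]
    have hΦint : IntegrableOn (fun τ => ‖y' τ‖) (Set.uIcc T t₁) :=
      (((hint t₁).mono_set (by
        rw [Set.uIcc_of_le ht₁]; exact Set.Icc_subset_Icc hT le_rfl)).norm)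
    have hΨcont : ContinuousOn Ψ (Set.Icc T t₁) := by
      have h1 : ContinuousOn Φ (Set.Icc T t₁) := by
        have := intervalIntegral.continuousOn_primitive_interval hΦint
        rwa [Set.uIcc_of_le ht₁] at this
      exact h1.add ((continuous_id.sub continuous_const).continuousOn)
    have hgcont : ContinuousOn (fun t => ‖y t‖ ^ 2) (Set.Icc T t₁) :=
      ((hcont.mono hIccIci).norm).pow 2
    -- closedness
    have hclosed : IsClosed (s ∩ Set.Icc T t₁) := by
      have hf : ContinuousOn (fun t => ‖y t‖ ^ 2 - (c ^ 2 + ε * Ψ t)) (Set.Icc T t₁) :=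
        hgcont.sub (continuousOn_const.add (continuousOn_const.mul hΨcont))
      have := hf.preimage_isClosed_of_isClosed isClosed_Icc isClosed_Iic (t := Set.Iic (0:ℝ))
      convert this using 1
      ext t
      simp only [hs, Set.mem_inter_iff, Set.mem_setOf_eq, Set.mem_preimage, Set.mem_Iic,
        sub_nonpos]
      tauto
    -- base point
    have hTmem : T ∈ s := by
      have hΨT : Ψ T = 0 := by simp [hΨ, hΦ]
      have : ‖y T‖ ^ 2 ≤ c ^ 2 := by
        have := pow_le_pow_left₀ (norm_nonneg (y T)) hinit 2
        simpa using this
      simp only [hs, Set.mem_setOf_eq, hΨT]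
      linarith
    -- the inductive step
    have hstep : ∀ x ∈ s ∩ Set.Ico T t₁, ∀ w ∈ Set.Ioi x, (s ∩ Set.Ioc x w).Nonempty := by
      intro x hx w hw
      have hxs := hx.1
      have hxT := hx.2.1
      have hxt₁ := hx.2.2
      have hx0 : (0:ℝ) ≤ x := hT.trans hxT
      -- continuity of y at x within Ici 0
      have hcx : ContinuousWithinAt y (Set.Ici 0) x := hcont x hx0
      rw [Metric.continuousWithinAt_iff] at hcx
      obtain ⟨δ, hδ0, hδ⟩ := hcx η hη0
      set z : ℝ := min w (min (x + δ / 2) t₁) with hz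
      have hxz : x < z := by
        apply lt_min hw
        exact lt_min (by linarith) hxt₁
      have hzt₁ : z ≤ t₁ := le_trans (min_le_right _ _) (min_le_right _ _)
      have hzT : T ≤ z := hxT.trans hxz.le
      have hznear : ∀ τ ∈ Set.Icc x z, ‖y τ - y x‖ < η := by
        intro τ hτ
        have hτ0 : τ ∈ Set.Ici (0:ℝ) := le_trans hx0 hτ.1
        have : dist τ x < δ := by
          rw [Real.dist_eq, abs_of_nonneg (by linarith [hτ.1])]
          have : τ ≤ x + δ / 2 := le_trans hτ.2 (le_trans (min_le_right _ _) (min_le_left _ _))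
          linarith
        have := hδ hτ0 this
        rwa [dist_eq_norm] at this
      refine ⟨z, ?_, ⟨hxz, min_le_left _ _⟩⟩
      -- Ψ z - Ψ x = ∫_x^z ‖y'‖ + (z - x)
      have hΦsub : Φ z - Φ x = ∫ τ in x..z, ‖y' τ‖ :=
        intervalIntegral.integral_interval_sub_left (hin T z hT hzT) (hin T x hT hxT)
      have hΦxz0 : 0 ≤ ∫ τ in x..z, ‖y' τ‖ :=
        intervalIntegral.integral_nonneg hxz.le (fun τ _ => norm_nonneg _)
      have hΨx0 : 0 ≤ Ψ z := by
        have : Φ z = ∫ τ in T..z, ‖y' τ‖ := rfl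
        have h1 : 0 ≤ Φ z := by
          rw [this]; exact intervalIntegral.integral_nonneg hzT (fun τ _ => norm_nonneg _)
        simp only [hΨ]; linarith
      by_cases hcase : ‖y x‖ + η ≤ c
      · -- still well inside the ball: stays inside by continuity
        have hyz : ‖y z‖ ≤ c := by
          have h1 : ‖y z‖ - ‖y x‖ ≤ ‖y z - y x‖ := norm_sub_norm_le _ _
          have h2 := hznear z ⟨hxz.le, le_rfl⟩
          linarith
        have : ‖y z‖ ^ 2 ≤ c ^ 2 := by
          have := pow_le_pow_left₀ (norm_nonneg (y z)) hyz 2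
          simpa using this
        simp only [hs, Set.mem_setOf_eq]
        nlinarith [hΨx0, hε.le]
      · -- near or outside the ball: use the differential inequality
        push_neg at hcase
        set v : EuclideanSpace ℝ (Fin n) := y z + y x with hv
        -- integral identity for the difference of squares
        have hIz : IntervalIntegrable y' volume x z := hi x z hx0 hxz.le
        have hid : ‖y z‖ ^ 2 - ‖y x‖ ^ 2 = ∫ τ in x..z, (inner ℝ (y' τ) v : ℝ) := by
          have h1 : (∫ τ in x..z, (inner ℝ (y' τ) v : ℝ))
              = ∫ τ in x..z, ((innerSL ℝ v) (y' τ) : ℝ) := by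
            refine intervalIntegral.integral_congr (fun τ _ => ?_)
            simp only [innerSL_apply_apply]
            exact real_inner_comm _ _
          have h2 : (∫ τ in x..z, ((innerSL ℝ v) (y' τ) : ℝ))
              = (innerSL ℝ v) (∫ τ in x..z, y' τ) :=
            ContinuousLinearMap.intervalIntegral_comp_comm _ hIz
          have h3 : (∫ τ in x..z, y' τ) = y z - y x := (hsub x z hx0 hxz.le).symm
          rw [h1, h2, h3]
          simp only [innerSL_apply_apply, hv]
          rw [inner_sub_right, inner_add_left, inner_add_left,
            real_inner_self_eq_norm_sq, real_inner_self_eq_norm_sq, real_inner_comm (y x) (y z)]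
          ring
        -- a.e. bound on the integrand
        have hae : ∀ᵐ τ ∂(volume.restrict (Set.Icc x z)),
            (inner ℝ (y' τ) v : ℝ) ≤ 4 * b * η + 3 * η * ‖y' τ‖ := by
          filter_upwards [ae_restrict_mem measurableSet_Icc,
            Filter.Eventually.filter_mono (ae_mono Measure.restrict_le_self) hineq']
            with τ hτ hpt
          have hτ0 : τ ∈ Set.Ici (0:ℝ) := le_trans hx0 hτ.1
          have hbd := hpt hτ0
          have hτnear := hznear τ hτ
          have hznear' := hznear z ⟨hxz.le, le_rfl⟩
          -- lower bound ‖y τ‖ > c - 2η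
          have hrl : c - 2 * η < ‖y τ‖ := by
            have h1 : ‖y x‖ - ‖y τ‖ ≤ ‖y τ - y x‖ := by
              have := norm_sub_norm_le (y x) (y τ)
              rwa [norm_sub_rev] at this
            linarith
          -- drift bound
          have hbr : b * ‖y τ‖ = a * c * ‖y τ‖ := by rw [hac]
          have hdrift : -a * ‖y τ‖ ^ 2 + b * ‖y τ‖ ≤ 2 * b * η := by
            rcases le_or_gt c ‖y τ‖ with h | h
            · have h1 : 0 ≤ a * ‖y τ‖ * (‖y τ‖ - c) :=
                mul_nonneg (mul_nonneg ha.le (norm_nonneg _)) (by linarith)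
              have h2 : 0 ≤ 2 * b * η := by positivity
              nlinarith [h1, h2, hbr]
            · have h1 : a * ‖y τ‖ * (c - ‖y τ‖) ≤ a * ‖y τ‖ * (2 * η) :=
                mul_le_mul_of_nonneg_left (by linarith) (mul_nonneg ha.le (norm_nonneg _))
              have h2 : a * ‖y τ‖ * (2 * η) ≤ a * c * (2 * η) :=
                mul_le_mul_of_nonneg_right (mul_le_mul_of_nonneg_left h.le ha.le)
                  (by positivity)
              nlinarith [h1, h2, hbr, hac]
          -- splitting the inner product
          have hsplit : (inner ℝ (y' τ) v : ℝ)
              = 2 * (inner ℝ (y' τ) (y τ) : ℝ) + (inner ℝ (y' τ) (v - (2:ℝ) • y τ) : ℝ) := by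
            rw [inner_sub_right, inner_smul_right]
            ring
          have hnv : ‖v - (2:ℝ) • y τ‖ ≤ 3 * η := by
            have : v - (2:ℝ) • y τ = (y z - y τ) + (y x - y τ) := by
              simp only [hv, two_smul]; abel
            rw [this]
            have h1 : ‖y z - y τ‖ ≤ ‖y z - y x‖ + ‖y x - y τ‖ := by
              have := norm_add_le (y z - y x) (y x - y τ)
              simpa using this
            have h2 : ‖y x - y τ‖ = ‖y τ - y x‖ := norm_sub_rev _ _
            calc ‖(y z - y τ) + (y x - y τ)‖ ≤ ‖y z - y τ‖ + ‖y x - y τ‖ := norm_add_le _ _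
              _ ≤ 3 * η := by rw [h2] at h1 ⊢; linarith [hznear']
          have h2nd : (inner ℝ (y' τ) (v - (2:ℝ) • y τ) : ℝ) ≤ 3 * η * ‖y' τ‖ := by
            calc (inner ℝ (y' τ) (v - (2:ℝ) • y τ) : ℝ) ≤ ‖y' τ‖ * ‖v - (2:ℝ) • y τ‖ :=
                  real_inner_le_norm _ _
              _ ≤ ‖y' τ‖ * (3 * η) := by
                  exact mul_le_mul_of_nonneg_left hnv (norm_nonneg _)
              _ = 3 * η * ‖y' τ‖ := by ring
          rw [hsplit]
          linarith
        -- integrability of both sides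
        have hint1 : IntervalIntegrable (fun τ => (inner ℝ (y' τ) v : ℝ)) volume x z := by
          have heq : (fun τ => (inner ℝ (y' τ) v : ℝ)) = fun τ => ((innerSL ℝ v) (y' τ) : ℝ) := by
            funext τ
            simp only [innerSL_apply_apply]
            exact real_inner_comm _ _
          rw [heq]
          exact ⟨(innerSL ℝ v).integrable_comp hIz.1, (innerSL ℝ v).integrable_comp hIz.2⟩
        have hint2 : IntervalIntegrable (fun τ => 4 * b * η + 3 * η * ‖y' τ‖) volume x z :=
          intervalIntegrable_const.add ((hin x z hx0 hxz.le).const_mul _)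
        have hmono := intervalIntegral.integral_mono_ae_restrict hxz.le hint1 hint2 hae
        have hrhs : (∫ τ in x..z, (4 * b * η + 3 * η * ‖y' τ‖))
            = 4 * b * η * (z - x) + 3 * η * ∫ τ in x..z, ‖y' τ‖ := by
          rw [intervalIntegral.integral_add intervalIntegrable_const
            ((hin x z hx0 hxz.le).const_mul _), intervalIntegral.integral_const,
            intervalIntegral.integral_const_mul]
          simp [mul_comm]
        -- conclude
        have hgx : ‖y x‖ ^ 2 ≤ c ^ 2 + ε * Ψ x := hxs
        simp only [hs, Set.mem_setOf_eq]
        have hb1 : 4 * b * η * (z - x) ≤ ε * (z - x) :=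
          mul_le_mul_of_nonneg_right h4b (by linarith)
        have hb2 : 3 * η * (∫ τ in x..z, ‖y' τ‖) ≤ ε * ∫ τ in x..z, ‖y' τ‖ :=
          mul_le_mul_of_nonneg_right h3η hΦxz0
        have hΨdiff : Ψ z - Ψ x = (∫ τ in x..z, ‖y' τ‖) + (z - x) := by
          simp only [hΨ]
          rw [← hΦsub]; ring
        rw [hrhs] at hmono
        rw [← hid] at hmono
        have h5 : ε * Ψ z = ε * Ψ x + ε * (∫ τ in x..z, ‖y' τ‖) + ε * (z - x) := by
          linear_combination ε * hΨdiff
        linarith [hmono, hb1, hb2, hgx, h5]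
    have := IsClosed.Icc_subset_of_forall_exists_gt hclosed hTmem hstep
    have ht₁s : t₁ ∈ s := this ⟨ht₁, le_rfl⟩
    simpa [hs, hΨ, hΦ] using ht₁s
  -- let ε → 0
  have hfinal : ‖y t₁‖ ^ 2 ≤ c ^ 2 := by
    set K : ℝ := (∫ τ in T..t₁, ‖y' τ‖) + (t₁ - T) with hK
    have hK0 : 0 ≤ K := by
      have : 0 ≤ ∫ τ in T..t₁, ‖y' τ‖ :=
        intervalIntegral.integral_nonneg ht₁ (fun τ _ => norm_nonneg _)
      simp only [hK]; linarith
    refine le_of_forall_pos_le_add (fun ε hε => ?_)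
    have := key (ε / (K + 1)) (div_pos hε (by linarith))
    have h1 : ε / (K + 1) * K ≤ ε := by
      rw [div_mul_eq_mul_div, div_le_iff₀ (by linarith)]
      nlinarith [hε.le, hK0]
    linarith
  nlinarith [norm_nonneg (y t₁), hc0, hfinal]
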